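/- Let (ε_n)_{n≥3} and (ε'_n)_{n≥3} be two sequences with values in {−1, 1} such that for some index k one has ε_k = −1 and ε'_k = 1, while ε_n = ε'_n for every n ≠ k. Define integer sequences by F̃₁ = F̃₂ = F̃'₁ = F̃'₂ = 1, F̃_{n+2} = |F̃_{n+1} + ε_{n+2}·F̃_n| and F̃'_{n+2} = |F̃'_{n+1} + ε'_{n+2}·F̃'_n| for n ≥ 1. Then F̃_n ≤ F̃'_n for every n ≥ 1. -/
import Mathlib


/-- The (deterministic) non-linear random Fibonacci sequence driven by a sequence of signs:
`F̃ 1 = F̃ 2 = 1` and `F̃ (n+2) = |F̃ (n+1) + ε (n+2) * F̃ n|` for `n ≥ 1`. -/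
def ntFib (ε : ℕ → ℤ) : ℕ → ℤ
  | 0 => 1
  | 1 => 1
  | 2 => 1
  | n + 3 => |ntFib ε (n + 2) + ε (n + 3) * ntFib ε (n + 1)|

namespace NtFibFlip

/-- The "left step" on pairs. -/
def Tm (p : ℤ × ℤ) : ℤ × ℤ := (p.2, |p.2 - p.1|)

/-- The "right step" on pairs. -/
def Tp (p : ℤ × ℤ) : ℤ × ℤ := (p.2, p.1 + p.2)

/-- Domination: every `Tm`-iterate of `p` is componentwise below that of `q`. -/
def Dom (p q : ℤ × ℤ) : Prop :=
  ∀ j, (Tm^[j] p).1 ≤ (Tm^[j] q).1 ∧ (Tm^[j] p).2 ≤ (Tm^[j] q).2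

lemma tm_iterate_nonneg (j : ℕ) (p : ℤ × ℤ) (h1 : 0 ≤ p.1) (h2 : 0 ≤ p.2) :
    0 ≤ (Tm^[j] p).1 ∧ 0 ≤ (Tm^[j] p).2 := by
  induction j generalizing p with
  | zero => exact ⟨h1, h2⟩
  | succ n ih =>
    rw [Function.iterate_succ_apply]
    exact ih (Tm p) h2 (abs_nonneg _)

lemma tm_tm_tp (a b : ℤ) (ha : 0 ≤ a) (hb : 0 ≤ b) :
    Tm (Tm (Tp (a, b))) = (a, b) := by
  simp only [Tm, Tp]
  rw [show a + b - b = a by ring, abs_of_nonneg ha, show a - (a + b) = -b by ring,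
    abs_neg, abs_of_nonneg hb]

lemma tm3_le (a b : ℤ) (ha : 0 ≤ a) (hb : 0 ≤ b) :
    (Tm (Tm (Tm (a, b)))).1 ≤ a ∧ (Tm (Tm (Tm (a, b)))).2 ≤ b := by
  simp only [Tm]
  have h1 := abs_choice (b - a)
  have n1 := abs_nonneg (b - a)
  set c := |b - a| with hc
  have h2 := abs_choice (c - b)
  have n2 := abs_nonneg (c - b)
  set d := |c - b| with hd
  have h3 := abs_choice (d - c)
  have n3 := abs_nonneg (d - c)
  set e := |d - c| with he
  constructor <;> omega

lemma dom_tm {p q : ℤ × ℤ} (h : Dom p q) : Dom (Tm p) (Tm q) := fun j => by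
  simpa only [← Function.iterate_succ_apply] using h (j + 1)

lemma dom_tp {p q : ℤ × ℤ} (hp1 : 0 ≤ p.1) (hp2 : 0 ≤ p.2)
    (h : Dom p q) : Dom (Tp p) (Tp q) := by
  obtain ⟨a, b⟩ := p
  obtain ⟨c, d⟩ := q
  simp only at hp1 hp2
  intro j
  match j with
  | 0 =>
    have h0 := h 0
    simp only [Function.iterate_zero_apply] at h0 ⊢
    exact ⟨h0.2, add_le_add h0.1 h0.2⟩
  | 1 =>
    have h0 := h 0
    simp only [Function.iterate_zero_apply] at h0
    simp only [Function.iterate_one, Tm, Tp]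
    rw [show a + b - b = a by ring, show c + d - d = c by ring]
    refine ⟨add_le_add h0.1 h0.2, ?_⟩
    calc |a| = a := abs_of_nonneg hp1
    _ ≤ c := h0.1
    _ ≤ |c| := le_abs_self c
  | (n + 2) =>
    have hc : 0 ≤ c := le_trans hp1 (h 0).1
    have hd : 0 ≤ d := le_trans hp2 (h 0).2
    have e1 : Tm^[n + 2] (Tp (a, b)) = Tm^[n] (a, b) := by
      rw [Function.iterate_add_apply,
        show Tm^[2] (Tp (a, b)) = Tm (Tm (Tp (a, b))) from rfl,
        tm_tm_tp a b hp1 hp2]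
    have e2 : Tm^[n + 2] (Tp (c, d)) = Tm^[n] (c, d) := by
      rw [Function.iterate_add_apply,
        show Tm^[2] (Tp (c, d)) = Tm (Tm (Tp (c, d))) from rfl,
        tm_tm_tp c d hc hd]
    rw [e1, e2]
    exact h n

lemma dom_seed (a b : ℤ) (ha : 0 ≤ a) (hb : 0 ≤ b) :
    Dom (Tm (a, b)) (Tp (a, b)) := by
  intro j
  match j with
  | 0 =>
    simp only [Function.iterate_zero_apply, Tm, Tp]
    have h1 := abs_choice (b - a)
    have n1 := abs_nonneg (b - a)
    set c := |b - a| with hc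
    exact ⟨le_refl b, by omega⟩
  | 1 =>
    simp only [Function.iterate_one, Tm, Tp]
    rw [show a + b - b = a by ring, abs_of_nonneg ha]
    have h1 := abs_choice (b - a)
    have n1 := abs_nonneg (b - a)
    set c := |b - a| with hc
    have h2 := abs_choice (c - b)
    have n2 := abs_nonneg (c - b)
    set d := |c - b| with hd
    constructor <;> omega
  | (n + 2) =>
    have e1 : Tm^[n + 2] (Tm (a, b)) = Tm (Tm (Tm (Tm^[n] (a, b)))) := by
      rw [← Function.iterate_succ_apply, show (n + 2).succ = 3 + n by omega,
        Function.iterate_add_apply]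
      rfl
    have e2 : Tm^[n + 2] (Tp (a, b)) = Tm^[n] (a, b) := by
      rw [Function.iterate_add_apply,
        show Tm^[2] (Tp (a, b)) = Tm (Tm (Tp (a, b))) from rfl,
        tm_tm_tp a b ha hb]
    rw [e1, e2]
    obtain ⟨hn1, hn2⟩ := tm_iterate_nonneg n (a, b) ha hb
    have := tm3_le (Tm^[n] (a, b)).1 (Tm^[n] (a, b)).2 hn1 hn2
    simpa using this

lemma ntFib_eq (ε : ℕ → ℤ) (n : ℕ) :
    ntFib ε (n + 3) = |ntFib ε (n + 2) + ε (n + 3) * ntFib ε (n + 1)| := by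
  rw [ntFib]

lemma ntFib_nonneg (ε : ℕ → ℤ) (n : ℕ) : 0 ≤ ntFib ε n := by
  match n with
  | 0 => norm_num [ntFib]
  | 1 => norm_num [ntFib]
  | 2 => norm_num [ntFib]
  | (n + 3) => rw [ntFib_eq]; exact abs_nonneg _

lemma ntFib_congr (ε ε' : ℕ → ℤ) (m : ℕ) (h : ∀ i, 3 ≤ i → i ≤ m → ε i = ε' i) :
    ntFib ε m = ntFib ε' m := by
  induction m using Nat.strong_induction_on with
  | _ m ih =>
    match m with
    | 0 => rfl
    | 1 => rfl
    | 2 => rfl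
    | (n + 3) =>
      rw [ntFib_eq, ntFib_eq, h (n + 3) (by omega) le_rfl,
        ih (n + 2) (by omega) (fun i h3 hi => h i h3 (by omega)),
        ih (n + 1) (by omega) (fun i h3 hi => h i h3 (by omega))]

lemma step_pos (ε : ℕ → ℤ) (i : ℕ) (h : ε (i + 3) = 1) :
    (ntFib ε (i + 2), ntFib ε (i + 3)) = Tp (ntFib ε (i + 1), ntFib ε (i + 2)) := by
  simp only [Tp, Prod.mk.injEq, true_and]
  rw [ntFib_eq, h, one_mul,
    abs_of_nonneg (add_nonneg (ntFib_nonneg ε (i + 2)) (ntFib_nonneg ε (i + 1)))]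
  ring

lemma step_neg (ε : ℕ → ℤ) (i : ℕ) (h : ε (i + 3) = -1) :
    (ntFib ε (i + 2), ntFib ε (i + 3)) = Tm (ntFib ε (i + 1), ntFib ε (i + 2)) := by
  simp only [Tm, Prod.mk.injEq, true_and]
  rw [ntFib_eq, h]
  congr 1
  ring

end NtFibFlip

open NtFibFlip in
/-- Turning a single `-1` sign into `+1` (i.e. a left step into a right step) can only increase
every label of the non-linear random Fibonacci sequence. -/
theorem ntFib_mono_of_sign_flip (ε ε' : ℕ → ℤ)
    (hval : ∀ n, ε n = 1 ∨ ε n = -1) (hval' : ∀ n, ε' n = 1 ∨ ε' n = -1)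
    (k : ℕ) (hk : ε k = -1) (hk' : ε' k = 1)
    (hagree : ∀ n, n ≠ k → ε n = ε' n) :
    ∀ n, 1 ≤ n → ntFib ε n ≤ ntFib ε' n := by
  by_cases hk3 : k ≤ 2
  · intro n _
    exact (ntFib_congr ε ε' n (fun i h3 _ => hagree i (by omega))).le
  · push_neg at hk3
    obtain ⟨j, rfl⟩ : ∃ j, k = j + 3 := ⟨k - 3, by omega⟩
    have hpre : ∀ m, m ≤ j + 2 → ntFib ε m = ntFib ε' m := fun m hm =>
      ntFib_congr ε ε' m (fun i _ hi => hagree i (by omega))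
    set a := ntFib ε (j + 1) with haa
    set b := ntFib ε (j + 2) with hbb
    have ha : 0 ≤ a := ntFib_nonneg ε (j + 1)
    have hb : 0 ≤ b := ntFib_nonneg ε (j + 2)
    have main : ∀ m, Dom (ntFib ε (j + 2 + m), ntFib ε (j + 3 + m))
        (ntFib ε' (j + 2 + m), ntFib ε' (j + 3 + m)) := by
      intro m
      induction m with
      | zero =>
        have h0 : (ntFib ε (j + 2 + 0), ntFib ε (j + 3 + 0)) = Tm (a, b) := by
          rw [show j + 2 + 0 = j + 2 by ring, show j + 3 + 0 = j + 3 by ring]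
          exact step_neg ε j hk
        have h0' : (ntFib ε' (j + 2 + 0), ntFib ε' (j + 3 + 0)) = Tp (a, b) := by
          rw [show j + 2 + 0 = j + 2 by ring, show j + 3 + 0 = j + 3 by ring]
          rw [haa, hbb, hpre (j + 1) (by omega), hpre (j + 2) (by omega)]
          exact step_pos ε' j hk'
        rw [h0, h0']
        exact dom_seed a b ha hb
      | succ m ih =>
        have hs : ε (j + m + 1 + 3) = ε' (j + m + 1 + 3) := hagree _ (by omega)
        have e1 : (ntFib ε (j + 2 + (m + 1)), ntFib ε (j + 3 + (m + 1)))
            = (ntFib ε (j + m + 1 + 2), ntFib ε (j + m + 1 + 3)) := by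
          rw [show j + 2 + (m + 1) = j + m + 1 + 2 by ring,
            show j + 3 + (m + 1) = j + m + 1 + 3 by ring]
        have e2 : (ntFib ε' (j + 2 + (m + 1)), ntFib ε' (j + 3 + (m + 1)))
            = (ntFib ε' (j + m + 1 + 2), ntFib ε' (j + m + 1 + 3)) := by
          rw [show j + 2 + (m + 1) = j + m + 1 + 2 by ring,
            show j + 3 + (m + 1) = j + m + 1 + 3 by ring]
        have epair : (ntFib ε (j + m + 1 + 1), ntFib ε (j + m + 1 + 2))
            = (ntFib ε (j + 2 + m), ntFib ε (j + 3 + m)) := by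
          rw [show j + m + 1 + 1 = j + 2 + m by ring, show j + m + 1 + 2 = j + 3 + m by ring]
        have epair' : (ntFib ε' (j + m + 1 + 1), ntFib ε' (j + m + 1 + 2))
            = (ntFib ε' (j + 2 + m), ntFib ε' (j + 3 + m)) := by
          rw [show j + m + 1 + 1 = j + 2 + m by ring, show j + m + 1 + 2 = j + 3 + m by ring]
        rw [e1, e2]
        rcases hval (j + m + 1 + 3) with h1 | h1
        · rw [step_pos ε (j + m + 1) h1, step_pos ε' (j + m + 1) (hs ▸ h1), epair, epair']
          exact dom_tp (ntFib_nonneg ε _) (ntFib_nonneg ε _) ih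
        · rw [step_neg ε (j + m + 1) h1, step_neg ε' (j + m + 1) (hs ▸ h1), epair, epair']
          exact dom_tm ih
    intro n hn
    rcases le_or_gt n (j + 2) with h | h
    · exact (hpre n h).le
    · obtain ⟨m, rfl⟩ : ∃ m, n = j + 3 + m := ⟨n - (j + 3), by omega⟩
      have := (main m 0).2
      simpa using this
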